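/- Let (X, ρ) be a separable metric space and c : X → Y a concept. Then there exists a countable family of open balls, each of which is a mutually-labeling set for c, whose union contains the set of all non-boundary points { x ∈ X : m_c(x) > 0 }. -/

import Mathlib

open scoped ENNReal

/-- The margin of a point `x`: the infimum distance (in `[0,∞]`) to points of a
different class under the concept `c`; `∞` if no such point exists. -/
noncomputable def margin {X Y : Type*} [MetricSpace X] (c : X → Y) (x : X) : ℝ≥0∞ :=
  ⨅ (x' : X) (_ : c x' ≠ c x), edist x x'

/-- A set `U` is mutually labeling for `c` if `ρ(x,x') < m_c(x)` for all `x, x' ∈ U`. -/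
def MutuallyLabeling {X Y : Type*} [MetricSpace X] (c : X → Y) (U : Set X) : Prop :=
  ∀ x ∈ U, ∀ x' ∈ U, edist x x' < margin c x

lemma margin_le {X Y : Type*} [MetricSpace X] (c : X → Y) {x x' : X}
    (h : c x' ≠ c x) : margin c x ≤ edist x x' :=
  iInf₂_le x' h

lemma margin_lipschitz {X Y : Type*} [MetricSpace X] (c : X → Y) (x u : X) :
    margin c x ≤ margin c u + edist x u := by
  by_cases h : c u = c x
  · conv_rhs => rw [margin]
    simp only [ENNReal.iInf_add]
    refine le_iInf fun x' => le_iInf fun h' => ?_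
    calc margin c x ≤ edist x x' := margin_le c (h ▸ h')
      _ ≤ edist x u + edist u x' := edist_triangle _ _ _
      _ = edist u x' + edist x u := add_comm _ _
  · exact (margin_le c h).trans le_add_self

/-- In a separable metric space there is a countable family of open balls, each
mutually labeling for `c`, whose union contains all non-boundary points
`{x | m_c(x) > 0}`. -/
theorem countable_mutuallyLabeling_cover {X Y : Type*} [MetricSpace X]
    [TopologicalSpace.SeparableSpace X] (c : X → Y) :
    ∃ S : Set (X × ℝ≥0∞), S.Countable ∧
      (∀ p ∈ S, MutuallyLabeling c (EMetric.ball p.1 p.2)) ∧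
      {x : X | 0 < margin c x} ⊆ ⋃ p ∈ S, EMetric.ball p.1 p.2 := by
  obtain ⟨D, hDc, hDd⟩ := TopologicalSpace.exists_countable_dense X
  set R : Set ℝ≥0∞ := Set.range (fun q : ℚ => ((Real.toNNReal q : ℝ≥0∞))) with hR
  refine ⟨{p : X × ℝ≥0∞ | p.1 ∈ D ∧ p.2 ∈ R ∧ MutuallyLabeling c (EMetric.ball p.1 p.2)},
    ?_, fun p hp => hp.2.2, ?_⟩
  · exact (hDc.prod (Set.countable_range _)).mono (fun p hp => Set.mem_prod.mpr ⟨hp.1, hp.2.1⟩)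
  · intro x hx
    set ε := margin c x with hε
    have hε8 : (0 : ℝ≥0∞) < ε / 8 := ENNReal.div_pos (ne_of_gt hx) (by norm_num)
    obtain ⟨qq, -, hq0, hq8⟩ := ENNReal.lt_iff_exists_rat_btwn.mp hε8
    set q : ℝ≥0∞ := (Real.toNNReal qq : ℝ≥0∞) with hqdef
    obtain ⟨d, hdD, hxd⟩ := EMetric.mem_closure_iff.mp (hDd x) q hq0
    have hqfin : q < ⊤ := ENNReal.coe_lt_top
    -- key: the ball is mutually labeling
    have hml : MutuallyLabeling c (EMetric.ball d q) := by
      intro u hu v hv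
      change edist u d < q at hu; change edist v d < q at hv
      by_contra hcon
      push_neg at hcon
      have hxu : edist x u < 2 * q := by
        calc edist x u ≤ edist x d + edist d u := edist_triangle _ _ _
          _ < q + q := ENNReal.add_lt_add hxd (by rwa [edist_comm] at hu)
          _ = 2 * q := (two_mul q).symm
      have huv : edist u v < 2 * q := by
        calc edist u v ≤ edist u d + edist d v := edist_triangle _ _ _
          _ < q + q := ENNReal.add_lt_add hu (by rwa [edist_comm] at hv)
          _ = 2 * q := (two_mul q).symm
      have h1 : ε < 4 * q := by
        calc ε ≤ margin c u + edist x u := margin_lipschitz c x u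
          _ ≤ edist u v + edist x u := add_le_add_left hcon _
          _ < 2 * q + 2 * q := ENNReal.add_lt_add huv hxu
          _ = 4 * q := by ring
      have h2 : 4 * q < 4 * (ε / 8) :=
        (ENNReal.mul_lt_mul_iff_right (by norm_num) (by norm_num)).mpr hq8
      have h3 : 4 * (ε / 8) ≤ ε := by
        calc 4 * (ε / 8) ≤ 8 * (ε / 8) := by gcongr; norm_num
          _ ≤ ε := ENNReal.mul_div_le
      exact absurd (h1.trans (h2.trans_le h3)) (lt_irrefl ε)
    have hmem : (d, q) ∈ {p : X × ℝ≥0∞ | p.1 ∈ D ∧ p.2 ∈ R ∧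
        MutuallyLabeling c (EMetric.ball p.1 p.2)} := ⟨hdD, ⟨qq, rfl⟩, hml⟩
    exact Set.mem_biUnion hmem (show edist x d < q from hxd)
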